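/- Let ω = (ω_n, …, ω_1, ω_0) be a general basis of the polynomials of degree ≤ n over a field F, let F, G ∈ F[x] with deg F = n > deg G = m, let B_ω be the Bézout matrix of F and G in ω, let 0 < k ≤ m, and let B_{ω,k} be the (n−k)×n submatrix of B_ω obtained by deleting its last k rows. Then det([B_{ω,k}; X_{ω,k}]) = detp_ω(B_{ω,k}) as an identity in F[x]. -/

import Mathlib

open Polynomial Matrix BigOperators

noncomputable section

/-- A *general basis* of the polynomials of degree ≤ `n` over `K`:
`ω i` is monic of degree `i` for every `i ≤ n`. -/
def IsGeneralBasis {K : Type*} [Field K] (n : ℕ) (ω : ℕ → Polynomial K) : Prop :=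
  ∀ i ≤ n, (ω i).Monic ∧ (ω i).natDegree = i

/-- `B` is the Bézout matrix of `P` and `Q` in the basis `ω`:
`P(x)Q(y) − P(y)Q(x) = (x − y) · ω̄(x)ᵀ B ω̄(y)` in `K[x,y] = (K[y])[x]`,
where the outer variable is `x` and the inner one is `y`, and
`ω̄ = (ω_{n−1}, …, ω_1, ω_0)ᵀ`. -/
def BezoutRelation {K : Type*} [Field K] (n : ℕ) (ω : ℕ → Polynomial K)
    (P Q : Polynomial K) (B : Matrix (Fin n) (Fin n) K) : Prop :=
  P.map Polynomial.C * Polynomial.C Q - Polynomial.C P * Q.map Polynomial.C =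
    (Polynomial.X - Polynomial.C Polynomial.X) *
      ∑ i : Fin n, ∑ j : Fin n,
        (ω (n - 1 - (i : ℕ))).map Polynomial.C * Polynomial.C (ω (n - 1 - (j : ℕ))) *
          Polynomial.C (Polynomial.C (B i j))

/-- The `(n−k) × n` submatrix of an `n × n` matrix obtained by deleting the last `k` rows. -/
def topRows {K : Type*} (n k : ℕ) (B : Matrix (Fin n) (Fin n) K) :
    Matrix (Fin (n - k)) (Fin n) K :=
  Matrix.of fun i j => B ⟨(i : ℕ), by have := i.isLt; omega⟩ j

/-- The `k × n` matrix `X_{ω,k}`: rows `1,…,k` carry `−I_k` in (1-based) columns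
`n−k, …, n−1`, and the last column of row `i` is `ω_{k+1−i}`. -/
def Xmat {K : Type*} [Field K] (n k : ℕ) (ω : ℕ → Polynomial K) :
    Matrix (Fin k) (Fin n) (Polynomial K) :=
  Matrix.of fun i j =>
    if (j : ℕ) = n - k - 1 + (i : ℕ) then -1
    else if (j : ℕ) = n - 1 then ω (k - (i : ℕ))
    else 0

/-- Stacking an `(n−k) × n` scalar matrix on top of a `k × n` polynomial matrix. -/
def stackMat {K : Type*} [Field K] {n k : ℕ}
    (M : Matrix (Fin (n - k)) (Fin n) K) (Y : Matrix (Fin k) (Fin n) (Polynomial K)) :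
    Matrix (Fin n) (Fin n) (Polynomial K) :=
  Matrix.of fun i j =>
    if h : (i : ℕ) < n - k then Polynomial.C (M ⟨(i : ℕ), h⟩ j)
    else Y ⟨(i : ℕ) - (n - k), by have := i.isLt; omega⟩ j

/-- The determinental polynomial of an `(n−k) × n` matrix `M` associated with `ω`:
`detp_ω M = Σ_{i=0}^k det(M̂_i) · ω_i` where `M̂_i` consists of the first `n−k−1`
columns of `M` together with its (1-based) `(n−i)`-th column. -/
def detp {K : Type*} [Field K] {n k : ℕ} (hkn : k < n) (ω : ℕ → Polynomial K)
    (M : Matrix (Fin (n - k)) (Fin n) K) : Polynomial K :=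
  ∑ i ∈ Finset.range (k + 1),
    Polynomial.C (Matrix.det (Matrix.of fun r c : Fin (n - k) =>
      if (c : ℕ) < n - k - 1 then M r ⟨(c : ℕ), by have := c.isLt; omega⟩
      else M r ⟨n - 1 - i, by omega⟩)) * ω i


-- multilinearity helper
lemma det_updateColumn_finset_sum {R : Type*} [CommRing R] {n : Type*} [DecidableEq n] [Fintype n]
    (A : Matrix n n R) (j : n) {α : Type*} (s : Finset α) (v : α → n → R) :
    (A.updateCol j (fun r => ∑ a ∈ s, v a r)).det = ∑ a ∈ s, (A.updateCol j (v a)).det := by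
  classical
  induction s using Finset.induction with
  | empty =>
      simp only [Finset.sum_empty]
      exact Matrix.det_eq_zero_of_column_eq_zero j (fun i => by simp)
  | insert a s ha ih =>
      simp only [Finset.sum_insert ha]
      rw [show (fun r => v a r + ∑ b ∈ s, v b r) = (fun r => v a r) + (fun r => ∑ b ∈ s, v b r) from rfl,
        Matrix.det_updateCol_add, ih]

-- inverse of finRotate coordinates
lemma finRotate_inv_coe {k : ℕ} (y : Fin (k + 1)) :
    (((finRotate (k + 1))⁻¹ y : Fin (k + 1)) : ℕ) = if (y : ℕ) = 0 then k else (y : ℕ) - 1 := by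
  rcases Nat.eq_zero_or_pos (y : ℕ) with h | h
  · rw [if_pos h]
    have : (finRotate (k + 1))⁻¹ y = Fin.last k := by
      rw [Equiv.Perm.inv_eq_iff_eq, finRotate_last]
      exact (Fin.ext h : y = 0)
    rw [this]; rfl
  · rw [if_neg (by omega)]
    have hy : (y : ℕ) - 1 < k + 1 := by omega
    have : (finRotate (k + 1))⁻¹ y = ⟨(y : ℕ) - 1, hy⟩ := by
      rw [Equiv.Perm.inv_eq_iff_eq, finRotate_succ_apply]
      apply Fin.ext
      rw [Fin.val_add_one_of_lt]
      · simp; omega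
      · rw [Fin.lt_iff_val_lt_val]; simp [Fin.last]; omega
    rw [this]

section Sigma
variable (n k : ℕ)

/-- The column permutation: identity on `0..n-k-2`, and rotates `n-k-1, …, n-1`
sending `n-k-1 ↦ n-1` and `j ↦ j-1` for `n-k-1 < j ≤ n-1`. -/
def sigmaPerm (hkn : k < n) : Equiv.Perm (Fin n) :=
  ((finSumFinEquiv.trans (finCongr (by omega : n - k - 1 + (k + 1) = n))).permCongr
    (Equiv.sumCongr (Equiv.refl (Fin (n - k - 1))) (finRotate (k + 1))⁻¹))

lemma sigmaPerm_sign (hkn : k < n) :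
    Equiv.Perm.sign (sigmaPerm n k hkn) = (-1) ^ k := by
  rw [sigmaPerm, Equiv.Perm.sign_permCongr, Equiv.Perm.sign_sumCongr, Equiv.Perm.sign_inv,
    sign_finRotate]
  simp

lemma sigmaPerm_coe (hkn : k < n) (j : Fin n) :
    ((sigmaPerm n k hkn j : Fin n) : ℕ) =
      if (j : ℕ) < n - k - 1 then (j : ℕ)
      else if (j : ℕ) = n - k - 1 then n - 1 else (j : ℕ) - 1 := by
  set h : Fin (n - k - 1) ⊕ Fin (k + 1) ≃ Fin n :=
    finSumFinEquiv.trans (finCongr (by omega : n - k - 1 + (k + 1) = n)) with hh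
  have happly_l : ∀ x : Fin (n - k - 1), ((h (Sum.inl x) : Fin n) : ℕ) = (x : ℕ) := by
    intro x; simp [hh, finSumFinEquiv_apply_left]
  have happly_r : ∀ x : Fin (k + 1), ((h (Sum.inr x) : Fin n) : ℕ) = (n - k - 1) + (x : ℕ) := by
    intro x; simp [hh, finSumFinEquiv_apply_right]
  rcases lt_or_ge (j : ℕ) (n - k - 1) with hj | hj
  · have hsymm : h.symm j = Sum.inl ⟨(j : ℕ), hj⟩ := by
      rw [Equiv.symm_apply_eq]; exact (Fin.ext (happly_l ⟨(j : ℕ), hj⟩)).symm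
    rw [if_pos hj]
    show ((h ((Equiv.sumCongr (Equiv.refl (Fin (n - k - 1))) (finRotate (k + 1))⁻¹) (h.symm j)) : Fin n) : ℕ) = _
    rw [hsymm]
    simpa using happly_l ⟨(j : ℕ), hj⟩
  · have hj2 : (j : ℕ) - (n - k - 1) < k + 1 := by have := j.isLt; omega
    have hsymm : h.symm j = Sum.inr ⟨(j : ℕ) - (n - k - 1), hj2⟩ := by
      rw [Equiv.symm_apply_eq]
      refine (Fin.ext ?_).symm
      rw [happly_r]
      show n - k - 1 + ((j : ℕ) - (n - k - 1)) = (j : ℕ)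
      omega
    rw [if_neg (by omega)]
    show ((h ((Equiv.sumCongr (Equiv.refl (Fin (n - k - 1))) (finRotate (k + 1))⁻¹) (h.symm j)) : Fin n) : ℕ) = _
    rw [hsymm]
    simp only [Equiv.sumCongr_apply, Sum.map_inr]
    rw [happly_r, finRotate_inv_coe]
    have hv : ((⟨(j : ℕ) - (n - k - 1), hj2⟩ : Fin (k + 1)) : ℕ) = (j : ℕ) - (n - k - 1) := rfl
    rw [hv]
    split_ifs <;> omega

end Sigma

section Main
variable {K : Type*} [Field K] (n k : ℕ) (hk0 : 0 < k) (hkn : k < n)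
  (ω : ℕ → Polynomial K) (M : Matrix (Fin (n - k)) (Fin n) K)

/-- The elementary column-operation matrix adding `ω_{k-t} ⬝ col(n-k-1+t)` to the last column. -/
def Emat : Matrix (Fin n) (Fin n) (Polynomial K) :=
  1 + Matrix.of (fun i j : Fin n =>
    if (j : ℕ) = n - 1 ∧ (i : ℕ) < n - 1 ∧ n - k - 1 ≤ (i : ℕ)
    then ω (k - ((i : ℕ) - (n - k - 1))) else 0)

lemma Emat_det : (Emat n k ω).det = 1 := by
  have htri : (Emat n k ω).BlockTriangular id := by
    intro i j hij
    have hij' : (j : ℕ) < (i : ℕ) := hij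
    simp only [Emat, Matrix.add_apply, Matrix.of_apply]
    rw [Matrix.one_apply_ne (by exact fun h => by subst h; omega)]
    rw [if_neg (by omega)]
    simp
  rw [Matrix.det_of_upperTriangular htri]
  apply Finset.prod_eq_one
  intro i _
  simp only [Emat, Matrix.add_apply, Matrix.of_apply, Matrix.one_apply_eq]
  rw [if_neg (by omega)]
  simp

end Main

/-- the combined last column -/
def combo {K : Type*} [Field K] (n k : ℕ) (hkn : k < n) (ω : ℕ → Polynomial K)
    (M : Matrix (Fin (n - k)) (Fin n) K) (r : Fin (n - k)) : Polynomial K :=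
  ∑ i ∈ Finset.range (k + 1), ω i * Polynomial.C (M r ⟨n - 1 - i, by omega⟩)

/-- The matrix after the column operations. -/
def Smat' {K : Type*} [Field K] (n k : ℕ) (hkn : k < n) (ω : ℕ → Polynomial K)
    (M : Matrix (Fin (n - k)) (Fin n) K) : Matrix (Fin n) (Fin n) (Polynomial K) :=
  Matrix.of fun i j =>
    if h : (i : ℕ) < n - k then
      (if (j : ℕ) = n - 1 then combo n k hkn ω M ⟨(i : ℕ), h⟩
       else Polynomial.C (M ⟨(i : ℕ), h⟩ j))
    else (if (j : ℕ) = n - k - 1 + ((i : ℕ) - (n - k)) then -1 else 0)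

lemma stack_mul_Emat {K : Type*} [Field K] (n k : ℕ) (hk0 : 0 < k) (hkn : k < n)
    (ω : ℕ → Polynomial K) (hω0 : ω 0 = 1) (M : Matrix (Fin (n - k)) (Fin n) K) :
    stackMat M (Xmat n k ω) * Emat n k ω = Smat' n k hkn ω M := by
  set S := stackMat M (Xmat n k ω) with hS
  rw [Emat, Matrix.mul_add, Matrix.mul_one]
  refine Matrix.ext (fun i j => ?_)
  rw [Matrix.add_apply, Matrix.mul_apply]
  by_cases hj : (j : ℕ) = n - 1
  case neg =>
    have hzero : ∀ l : Fin n, S i l * Matrix.of (fun i j : Fin n =>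
        if (j : ℕ) = n - 1 ∧ (i : ℕ) < n - 1 ∧ n - k - 1 ≤ (i : ℕ)
        then ω (k - ((i : ℕ) - (n - k - 1))) else 0) l j = 0 := by
      intro l
      rw [Matrix.of_apply, if_neg (by tauto), mul_zero]
    rw [Finset.sum_eq_zero (fun l _ => hzero l), add_zero]
    simp only [hS, stackMat, Xmat, Smat', Matrix.of_apply]
    split_ifs <;> rfl
  case pos =>
    by_cases hi : (i : ℕ) < n - k
    · -- top rows
      set r : Fin (n - k) := ⟨(i : ℕ), hi⟩ with hr
      have hSil : ∀ l : Fin n, S i l = Polynomial.C (M r l) := by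
        intro l; simp only [hS, stackMat, Matrix.of_apply, dif_pos hi]; rfl
      set g : ℕ → Polynomial K := fun l' => if hl : l' < n then
            (if l' < n - 1 ∧ n - k - 1 ≤ l' then
              Polynomial.C (M r ⟨l', hl⟩) * ω (k - (l' - (n - k - 1))) else 0)
          else 0 with hg
      have hform : ∀ l : Fin n, S i l * Matrix.of (fun i j : Fin n =>
          if (j : ℕ) = n - 1 ∧ (i : ℕ) < n - 1 ∧ n - k - 1 ≤ (i : ℕ)
          then ω (k - ((i : ℕ) - (n - k - 1))) else 0) l j = g (l : ℕ) := by
        intro l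
        rw [hSil l, Matrix.of_apply, hg]
        simp only [l.isLt, dif_pos]
        by_cases hc : (l : ℕ) < n - 1 ∧ n - k - 1 ≤ (l : ℕ)
        · rw [if_pos ⟨hj, hc⟩, if_pos hc]
        · rw [if_neg (by tauto), if_neg hc, mul_zero]
      rw [Finset.sum_congr rfl (fun l _ => hform l), Fin.sum_univ_eq_sum_range g n]
      have hsum2 : ∑ l ∈ Finset.range n, g l = ∑ l ∈ Finset.Ico (n - k - 1) (n - 1), g l := by
        refine (Finset.sum_subset ?_ ?_).symm
        · intro x hx
          rw [Finset.mem_Ico] at hx; rw [Finset.mem_range]; omega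
        · intro x hx hx2
          rw [Finset.mem_range] at hx; rw [Finset.mem_Ico] at hx2
          rw [hg]; simp only [dif_pos hx]
          rw [if_neg (by omega)]
      rw [hsum2, Finset.sum_Ico_eq_sum_range, show n - 1 - (n - k - 1) = k from by omega]
      have hsum3 : ∑ t ∈ Finset.range k, g (n - k - 1 + t)
          = ∑ t ∈ Finset.range k, ω (t + 1) * Polynomial.C (M r ⟨n - 1 - (t + 1), by omega⟩) := by
        refine Finset.sum_nbij' (fun t => k - 1 - t) (fun t => k - 1 - t) ?_ ?_ ?_ ?_ ?_
        · intro a ha; simp only [Finset.mem_range] at ha ⊢; omega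
        · intro a ha; simp only [Finset.mem_range] at ha ⊢; omega
        · intro a ha; simp only [Finset.mem_range] at ha; beta_reduce; omega
        · intro a ha; simp only [Finset.mem_range] at ha; beta_reduce; omega
        · intro a ha
          simp only [Finset.mem_range] at ha
          simp only [hg]
          rw [dif_pos (by omega : n - k - 1 + a < n), if_pos (by omega : n - k - 1 + a < n - 1 ∧ n - k - 1 ≤ n - k - 1 + a)]
          rw [show k - (n - k - 1 + a - (n - k - 1)) = k - 1 - a + 1 from by omega]
          rw [mul_comm]
          congr 1
          apply congrArg
          apply congrArg
          apply Fin.ext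
          show n - k - 1 + a = n - 1 - (k - 1 - a + 1)
          omega
      rw [hsum3]
      -- now the RHS
      have hRHS : Smat' n k hkn ω M i j = combo n k hkn ω M r := by
        simp only [Smat', Matrix.of_apply, dif_pos hi, if_pos hj]; rfl
      rw [hRHS, combo, Finset.sum_range_succ']
      rw [hω0, one_mul]
      rw [hSil j]
      have hjj : M r j = M r ⟨n - 1 - 0, by omega⟩ := by
        congr 1
        exact Fin.ext (by simpa using hj)
      rw [hjj]
      exact add_comm _ _
    · -- bottom rows
      have hi' : (i : ℕ) - (n - k) < k := by have := i.isLt; omega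
      have hSil : ∀ l : Fin n, S i l =
          (if (l : ℕ) = n - k - 1 + ((i : ℕ) - (n - k)) then -1
           else if (l : ℕ) = n - 1 then ω (k - ((i : ℕ) - (n - k))) else 0) := by
        intro l; simp only [hS, stackMat, Xmat, Matrix.of_apply, dif_neg hi]
      have hkey : ∑ l : Fin n, S i l * Matrix.of (fun i j : Fin n =>
          if (j : ℕ) = n - 1 ∧ (i : ℕ) < n - 1 ∧ n - k - 1 ≤ (i : ℕ)
          then ω (k - ((i : ℕ) - (n - k - 1))) else 0) l j
          = - ω (k - ((i : ℕ) - (n - k))) := by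
        have ha : (n - k - 1 + ((i : ℕ) - (n - k))) < n := by omega
        rw [Finset.sum_eq_single_of_mem (⟨n - k - 1 + ((i : ℕ) - (n - k)), ha⟩ : Fin n)
          (Finset.mem_univ _)]
        · rw [hSil, Matrix.of_apply]
          have hv : ((⟨n - k - 1 + ((i : ℕ) - (n - k)), ha⟩ : Fin n) : ℕ)
              = n - k - 1 + ((i : ℕ) - (n - k)) := rfl
          rw [hv, if_pos rfl, if_pos ⟨hj, by omega, by omega⟩]
          rw [show n - k - 1 + ((i : ℕ) - (n - k)) - (n - k - 1) = (i : ℕ) - (n - k) from by omega]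
          ring
        · intro b _ hb
          rw [hSil, Matrix.of_apply]
          by_cases h1 : (b : ℕ) = n - k - 1 + ((i : ℕ) - (n - k))
          · exact absurd (Fin.ext h1) hb
          · rw [if_neg h1]
            by_cases h2 : (b : ℕ) = n - 1
            · rw [if_pos h2, if_neg (by omega), mul_zero]
            · rw [if_neg h2, zero_mul]
      rw [hkey, hSil j, if_neg (by omega), if_pos hj]
      have hRHS : Smat' n k hkn ω M i j = 0 := by
        simp only [Smat', Matrix.of_apply, dif_neg hi]
        rw [if_neg (by omega)]
      rw [hRHS]
      ring

/-- The `(n-k) × (n-k)` matrix whose determinant gives the answer. -/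
def Amat {K : Type*} [Field K] (n k : ℕ) (hkn : k < n) (ω : ℕ → Polynomial K)
    (M : Matrix (Fin (n - k)) (Fin n) K) : Matrix (Fin (n - k)) (Fin (n - k)) (Polynomial K) :=
  Matrix.of fun r c => if (c : ℕ) < n - k - 1
    then Polynomial.C (M r ⟨(c : ℕ), by have := c.isLt; omega⟩)
    else combo n k hkn ω M r

section Blocks
variable {K : Type*} [Field K]

/-- block equiv -/
def eEquiv (n k : ℕ) (hkn : k < n) : Fin n ≃ Fin (n - k) ⊕ Fin k :=
  (finCongr (by omega : n = (n - k) + k)).trans finSumFinEquiv.symm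

lemma eEquiv_lt (n k : ℕ) (hkn : k < n) (i : Fin n) (h : (i : ℕ) < n - k) :
    eEquiv n k hkn i = Sum.inl ⟨(i : ℕ), h⟩ := by
  rw [eEquiv, Equiv.trans_apply, Equiv.symm_apply_eq, finSumFinEquiv_apply_left]
  exact Fin.ext rfl

lemma eEquiv_ge (n k : ℕ) (hkn : k < n) (i : Fin n) (h : ¬ (i : ℕ) < n - k) :
    eEquiv n k hkn i = Sum.inr ⟨(i : ℕ) - (n - k), by have := i.isLt; omega⟩ := by
  rw [eEquiv, Equiv.trans_apply, Equiv.symm_apply_eq, finSumFinEquiv_apply_right]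
  refine Fin.ext ?_
  show (i : ℕ) = (n - k) + ((i : ℕ) - (n - k))
  omega

lemma Smat'_submatrix (n k : ℕ) (hk0 : 0 < k) (hkn : k < n) (ω : ℕ → Polynomial K)
    (M : Matrix (Fin (n - k)) (Fin n) K) :
    (Smat' n k hkn ω M).submatrix id (sigmaPerm n k hkn) =
      (Matrix.fromBlocks (Amat n k hkn ω M)
        (Matrix.of fun r c => Smat' n k hkn ω M ((eEquiv n k hkn).symm (Sum.inl r))
          (sigmaPerm n k hkn ((eEquiv n k hkn).symm (Sum.inr c))))
        0 (-1)).submatrix (eEquiv n k hkn) (eEquiv n k hkn) := by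
  refine Matrix.ext (fun i j => ?_)
  rw [Matrix.submatrix_apply, Matrix.submatrix_apply, id_eq]
  by_cases hi : (i : ℕ) < n - k <;> by_cases hj : (j : ℕ) < n - k
  · -- top-left
    rw [eEquiv_lt n k hkn i hi, eEquiv_lt n k hkn j hj, Matrix.fromBlocks_apply₁₁]
    by_cases hj1 : (j : ℕ) < n - k - 1
    · have hσ : sigmaPerm n k hkn j = j := by
        refine Fin.ext ?_
        rw [sigmaPerm_coe n k hkn j, if_pos hj1]
      rw [hσ]
      simp only [Smat', Amat, Matrix.of_apply, dif_pos hi]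
      rw [if_neg (by omega), if_pos hj1]
    · have hj2 : (j : ℕ) = n - k - 1 := by omega
      have hσ : ((sigmaPerm n k hkn j : Fin n) : ℕ) = n - 1 := by
        rw [sigmaPerm_coe n k hkn j, if_neg (by omega), if_pos hj2]
      simp only [Smat', Amat, Matrix.of_apply, dif_pos hi]
      rw [if_pos hσ, if_neg (by omega)]
  · -- top-right
    rw [eEquiv_lt n k hkn i hi, eEquiv_ge n k hkn j hj, Matrix.fromBlocks_apply₁₂,
      Matrix.of_apply, ← eEquiv_lt n k hkn i hi, ← eEquiv_ge n k hkn j hj,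
      Equiv.symm_apply_apply, Equiv.symm_apply_apply]
  · -- bottom-left
    rw [eEquiv_ge n k hkn i hi, eEquiv_lt n k hkn j hj, Matrix.fromBlocks_apply₂₁]
    have hσ : ((sigmaPerm n k hkn j : Fin n) : ℕ) ≠ n - k - 1 + ((i : ℕ) - (n - k)) := by
      rw [sigmaPerm_coe n k hkn j]
      have := i.isLt
      split_ifs <;> omega
    simp only [Smat', Matrix.of_apply, dif_neg hi]
    rw [if_neg hσ]
    rfl
  · -- bottom-right
    rw [eEquiv_ge n k hkn i hi, eEquiv_ge n k hkn j hj, Matrix.fromBlocks_apply₂₂]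
    have hσ : ((sigmaPerm n k hkn j : Fin n) : ℕ) = (j : ℕ) - 1 := by
      rw [sigmaPerm_coe n k hkn j, if_neg (by omega), if_neg (by omega)]
    simp only [Smat', Matrix.of_apply, dif_neg hi]
    rw [Matrix.neg_apply, Matrix.one_apply]
    have hvi : ((⟨(i : ℕ) - (n - k), by have := i.isLt; omega⟩ : Fin k) : ℕ) = (i : ℕ) - (n - k) := rfl
    by_cases heq : (i : ℕ) - (n - k) = (j : ℕ) - (n - k)
    · rw [if_pos (by rw [hσ]; have := i.isLt; have := j.isLt; omega),
        if_pos (Fin.ext (by rw [hvi]; exact heq))]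
    · rw [if_neg (by rw [hσ]; have := i.isLt; have := j.isLt; omega),
        if_neg (fun hc => heq (congrArg Fin.val hc)), neg_zero]

lemma Smat'_det (n k : ℕ) (hk0 : 0 < k) (hkn : k < n) (ω : ℕ → Polynomial K)
    (M : Matrix (Fin (n - k)) (Fin n) K) :
    (Smat' n k hkn ω M).det = (Amat n k hkn ω M).det := by
  have h1 := Matrix.det_permute' (sigmaPerm n k hkn) (Smat' n k hkn ω M)
  rw [Smat'_submatrix n k hk0 hkn ω M, Matrix.det_submatrix_equiv_self,
    Matrix.det_fromBlocks_zero₂₁, sigmaPerm_sign n k hkn] at h1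
  have hneg : ((-1 : Matrix (Fin k) (Fin k) (Polynomial K))).det = (-1 : Polynomial K) ^ k := by
    rw [show (-1 : Matrix (Fin k) (Fin k) (Polynomial K)) = -(1 : Matrix (Fin k) (Fin k) (Polynomial K)) from rfl,
      Matrix.det_neg, Matrix.det_one, Fintype.card_fin, mul_one]
  rw [hneg] at h1
  have hcast : ((((-1 : ℤˣ) ^ k : ℤˣ) : ℤ) : Polynomial K) = (-1 : Polynomial K) ^ k := by
    push_cast; ring
  rw [hcast] at h1
  have h2 : ((-1 : Polynomial K) ^ k) * ((-1 : Polynomial K) ^ k) = 1 := by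
    rw [← mul_pow]; norm_num
  calc (Smat' n k hkn ω M).det
      = (((-1 : Polynomial K) ^ k) * ((-1 : Polynomial K) ^ k)) * (Smat' n k hkn ω M).det := by
        rw [h2, one_mul]
    _ = ((-1 : Polynomial K) ^ k) * ((Amat n k hkn ω M).det * ((-1 : Polynomial K) ^ k)) := by
        rw [mul_assoc, ← h1]
    _ = (Amat n k hkn ω M).det * (((-1 : Polynomial K) ^ k) * ((-1 : Polynomial K) ^ k)) := by ring
    _ = (Amat n k hkn ω M).det := by rw [h2, mul_one]

end Blocks

lemma Amat_det {K : Type*} [Field K] (n k : ℕ) (hk0 : 0 < k) (hkn : k < n)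
    (ω : ℕ → Polynomial K) (M : Matrix (Fin (n - k)) (Fin n) K) :
    (Amat n k hkn ω M).det = detp hkn ω M := by
  have hjlt : n - k - 1 < n - k := by omega
  set jlast : Fin (n - k) := ⟨n - k - 1, hjlt⟩ with hjlast
  set Amap : Matrix (Fin (n - k)) (Fin (n - k)) (Polynomial K) :=
    Matrix.of (fun r c => if (c : ℕ) < n - k - 1
      then Polynomial.C (M r ⟨(c : ℕ), by have := c.isLt; omega⟩) else 0) with hAmap
  have hA : Amat n k hkn ω M = Amap.updateCol jlast
      (fun r => ∑ i ∈ Finset.range (k + 1),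
        (fun i r => ω i * Polynomial.C (M r ⟨n - 1 - i, by omega⟩)) i r) := by
    refine Matrix.ext (fun r c => ?_)
    rw [Matrix.updateCol_apply]
    by_cases hc : (c : ℕ) < n - k - 1
    · rw [if_neg (show c ≠ jlast from fun hcc => absurd (hcc ▸ hc) (lt_irrefl _))]
      simp only [Amat, Amap, Matrix.of_apply, if_pos hc]
    · have hcc : c = jlast := Fin.ext (show (c : ℕ) = n - k - 1 by have := c.isLt; omega)
      rw [if_pos hcc]
      simp only [Amat, Matrix.of_apply, if_neg hc, combo]
  rw [hA, det_updateColumn_finset_sum]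
  rw [_root_.detp]
  refine Finset.sum_congr rfl (fun i hi => ?_)
  have hsmul : (fun r => ω i * Polynomial.C (M r ⟨n - 1 - i, by omega⟩))
      = ω i • (fun r => Polynomial.C (M r ⟨n - 1 - i, by omega⟩)) := rfl
  rw [hsmul, Matrix.det_updateCol_smul]
  have hmap : Amap.updateCol jlast (fun r => Polynomial.C (M r ⟨n - 1 - i, by omega⟩))
      = (Matrix.of fun r c : Fin (n - k) =>
          if (c : ℕ) < n - k - 1 then M r ⟨(c : ℕ), by have := c.isLt; omega⟩
          else M r ⟨n - 1 - i, by omega⟩).map Polynomial.C := by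
    refine Matrix.ext (fun r c => ?_)
    rw [Matrix.updateCol_apply, Matrix.map_apply, Matrix.of_apply]
    by_cases hc : (c : ℕ) < n - k - 1
    · rw [if_neg (show c ≠ jlast from fun hcc => absurd (hcc ▸ hc) (lt_irrefl _)), if_pos hc]
      simp only [Amap, Matrix.of_apply, if_pos hc]
    · have hcc : c = jlast := Fin.ext (show (c : ℕ) = n - k - 1 by have := c.isLt; omega)
      rw [if_pos hcc, if_neg hc]
  rw [hmap, mul_comm]
  congr 1
  exact (RingHom.map_det (Polynomial.C : K →+* Polynomial K) _).symm

lemma stack_det_aux {K : Type*} [Field K] (n k : ℕ) (hk0 : 0 < k) (hkn : k < n)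
    (ω : ℕ → Polynomial K) (hω0 : ω 0 = 1) (M : Matrix (Fin (n - k)) (Fin n) K) :
    (stackMat M (Xmat n k ω)).det = detp hkn ω M := by
  have h1 : (stackMat M (Xmat n k ω)).det
      = (stackMat M (Xmat n k ω) * Emat n k ω).det := by
    rw [Matrix.det_mul, Emat_det, mul_one]
  rw [h1, stack_mul_Emat n k hk0 hkn ω hω0 M, Smat'_det n k hk0 hkn ω M,
    Amat_det n k hk0 hkn ω M]

/-- for the truncated Bézout matrix `B_{ω,k}` of `F` and `G` in `ω`,
`det [B_{ω,k}; X_{ω,k}] = detp_ω (B_{ω,k})` in `F[x]`. -/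
theorem stack_det_eq_detp_bezout
    {K : Type*} [Field K] (n m k : ℕ) (hmn : m < n) (hk0 : 0 < k) (hkm : k ≤ m)
    (ω : ℕ → Polynomial K) (hω : IsGeneralBasis n ω)
    (P Q : Polynomial K) (hdegP : P.natDegree = n) (hdegQ : Q.natDegree = m)
    (B : Matrix (Fin n) (Fin n) K) (hB : BezoutRelation n ω P Q B) :
    (stackMat (topRows n k B) (Xmat n k ω)).det =
      detp (lt_of_le_of_lt hkm hmn) ω (topRows n k B) := by
  have hω0 : ω 0 = 1 := by
    obtain ⟨h1, h2⟩ := hω 0 (Nat.zero_le n)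
    exact h1.natDegree_eq_zero.mp h2
  exact stack_det_aux n k hk0 (lt_of_le_of_lt hkm hmn) ω hω0 (topRows n k B)
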